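/- arXiv:2006.12241 — 6 statements merged into one kernel-verified Lean document; each statement's English description precedes it below -/
import Mathlib

section
/- Let A be a bounded self-adjoint operator on a Hilbert space H, φ, ψ ∈ H nonzero, B = A + ⟨·,φ⟩ψ, and F(λ) = ⟨(A−λ)⁻¹ψ, φ⟩ + 1 for λ ∈ ρ(A). Then a point λ ∈ ρ(A) is an eigenvalue of B if and only if F(λ) = 0, and in that case (A−λ)⁻¹ψ is a corresponding eigenvector. -/
/-- For a bounded self-adjoint operator `A`, nonzero `φ ψ`,
`B = A + ⟨·,φ⟩ψ`, and `λ ∈ ρ(A)` (witnessed by the resolvent `R = (A−λ)⁻¹`),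
the point `λ` is an eigenvalue of `B` iff `F(λ) = ⟨(A−λ)⁻¹ψ,φ⟩+1 = 0`, and
in that case `(A−λ)⁻¹ψ` is a corresponding eigenvector. -/
theorem stmt_1 {H : Type*} [NormedAddCommGroup H] [InnerProductSpace ℂ H] [CompleteSpace H]
    (A B : H →L[ℂ] H) (hA : IsSelfAdjoint A)
    (φ ψ : H) (hφ : φ ≠ 0) (hψ : ψ ≠ 0)
    (hB : ∀ x, B x = A x + (inner ℂ φ x : ℂ) • ψ)
    (lam : ℂ) (R : H →L[ℂ] H)
    (hR1 : (A - lam • 1) * R = 1) (hR2 : R * (A - lam • 1) = 1)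
    (F : ℂ) (hF : F = (inner ℂ φ (R ψ) : ℂ) + 1) :
    ((∃ x, x ≠ 0 ∧ B x = lam • x) ↔ F = 0) ∧
      (F = 0 → R ψ ≠ 0 ∧ B (R ψ) = lam • R ψ) := by
  have happ1 : ∀ x, A (R x) - lam • R x = x := by
    intro x
    have := congrFun (congrArg DFunLike.coe hR1) x
    simpa [ContinuousLinearMap.mul_apply, ContinuousLinearMap.sub_apply,
      ContinuousLinearMap.smul_apply, ContinuousLinearMap.one_apply] using this
  have happ2 : ∀ x, R (A x - lam • x) = x := by
    intro x
    have := congrFun (congrArg DFunLike.coe hR2) x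
    simpa [ContinuousLinearMap.mul_apply, ContinuousLinearMap.sub_apply,
      ContinuousLinearMap.smul_apply, ContinuousLinearMap.one_apply] using this
  have hRψ : R ψ ≠ 0 := by
    intro h
    apply hψ
    have := happ1 ψ
    rw [h] at this
    simpa using this.symm
  have hvec : F = 0 → B (R ψ) = lam • R ψ := by
    intro hF0
    have hc : (inner ℂ φ (R ψ) : ℂ) = -1 := by
      have h1 : (inner ℂ φ (R ψ) : ℂ) + 1 = 0 := hF ▸ hF0
      linear_combination h1
    rw [hB (R ψ), hc]
    have := happ1 ψ
    have hA' : A (R ψ) = ψ + lam • R ψ := by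
      linear_combination (norm := module) this
    rw [hA']
    module
  refine ⟨⟨?_, fun hF0 => ⟨R ψ, hRψ, hvec hF0⟩⟩, fun hF0 => ⟨hRψ, hvec hF0⟩⟩
  rintro ⟨x, hx, hBx⟩
  rw [hB x] at hBx
  have hsub : A x - lam • x = -((inner ℂ φ x : ℂ) • ψ) := by
    linear_combination (norm := module) hBx
  have hx' : x = -((inner ℂ φ x : ℂ) • R ψ) := by
    have := happ2 x
    rw [hsub] at this
    simpa [map_neg, map_smul] using this.symm
  have hcx : (inner ℂ φ x : ℂ) ≠ 0 := by
    intro h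
    apply hx
    rw [hx', h, zero_smul, neg_zero]
  have key : (inner ℂ φ x : ℂ) = -((inner ℂ φ x : ℂ) * (inner ℂ φ (R ψ) : ℂ)) := by
    conv_lhs => rw [hx']
    rw [inner_neg_right, inner_smul_right]
  have : (inner ℂ φ x : ℂ) * F = 0 := by
    rw [hF]
    linear_combination key
  rcases mul_eq_zero.mp this with h | h
  · exact absurd h hcx
  · exact h
end

section
/- Let A be a bounded self-adjoint operator, B = A + ⟨·,φ⟩ψ, and λ* ∈ ρ(A) a zero of F(λ) = ⟨(A−λ)⁻¹ψ,φ⟩ + 1 such that F(λ*) = F'(λ*) = ⋯ = F^{(l)}(λ*) = 0. Then the vectors yₖ = (A−λ*)^{−(1+k)}ψ, k = 0,1,…,l, form a Jordan chain of B for the eigenvalue λ*: (B−λ*)y₀ = 0 and (B−λ*)yₖ = yₖ₋₁ for 1 ≤ k ≤ l. -/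
/-- If `λ* ∈ ρ(A)` (with resolvent `R = (A−λ*)⁻¹`) is a zero of the
characteristic function `F` of order hypotheses `F(λ*) = F'(λ*) = ⋯ = F^{(l)}(λ*) = 0`
(expressed via `F^{(k)}(λ*)/k! = ⟨(A−λ*)^{−(1+k)}ψ, φ⟩`), then the vectors
`yₖ = (A−λ*)^{−(1+k)}ψ`, `k = 0,…,l`, form a Jordan chain of `B = A + ⟨·,φ⟩ψ`
at the eigenvalue `λ*`. -/
theorem stmt_6 {H : Type*} [NormedAddCommGroup H] [InnerProductSpace ℂ H] [CompleteSpace H]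
    (A B : H →L[ℂ] H) (hA : IsSelfAdjoint A)
    (φ ψ : H)
    (hB : ∀ x, B x = A x + (inner ℂ φ x : ℂ) • ψ)
    (lam : ℂ) (R : H →L[ℂ] H)
    (hR1 : (A - lam • 1) * R = 1) (hR2 : R * (A - lam • 1) = 1)
    (l : ℕ)
    (hF0 : (inner ℂ φ (R ψ) : ℂ) + 1 = 0)
    (hFk : ∀ k, 1 ≤ k → k ≤ l → (inner ℂ φ ((R ^ (k + 1)) ψ) : ℂ) = 0)
    (y : ℕ → H) (hy : ∀ k, y k = (R ^ (k + 1)) ψ) :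
    B (y 0) = lam • y 0 ∧ ∀ k, 1 ≤ k → k ≤ l → B (y k) - lam • y k = y (k - 1) := by
  have key : ∀ k : ℕ, A ((R ^ (k + 1)) ψ) - lam • (R ^ (k + 1)) ψ = (R ^ k) ψ := by
    intro k
    have h : (A - lam • 1) * R ^ (k + 1) = R ^ k := by
      rw [pow_succ, ← mul_assoc]
      have : (A - lam • 1) * R ^ k = R ^ k * (A - lam • 1) := by
        induction k with
        | zero => simp [mul_comm]
        | succ n ih =>
          rw [pow_succ, ← mul_assoc, ih, mul_assoc, mul_assoc]
          congr 1
          exact hR1.trans hR2.symm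
      rw [this, mul_assoc, hR1, mul_one]
    have := congrArg (fun T : H →L[ℂ] H => T ψ) h
    simpa [ContinuousLinearMap.sub_apply, ContinuousLinearMap.smul_apply,
      ContinuousLinearMap.one_apply, ContinuousLinearMap.mul_apply] using this
  constructor
  · have hk := key 0
    rw [hy 0, hB]
    have hc : (inner ℂ φ (R ψ) : ℂ) = -1 := by linear_combination hF0
    simp only [zero_add, pow_one] at hk ⊢
    rw [hc]
    simp only [pow_zero, ContinuousLinearMap.one_apply] at hk
    linear_combination (norm := module) hk
  · intro k hk1 hkl
    rw [hy k, hy (k - 1), hB, hFk k hk1 hkl]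
    have : k - 1 + 1 = k := Nat.succ_pred_eq_of_pos hk1
    rw [this]
    simpa using key k
end

section
/- Let A be a bounded self-adjoint operator with simple discrete spectrum, B = A + ⟨·,φ⟩ψ, and λ* ∈ ρ(A) an eigenvalue of B. Then the algebraic multiplicity of λ* as an eigenvalue of B equals the order of λ* as a zero of the characteristic function F(λ) = ⟨(A−λ)⁻¹ψ,φ⟩ + 1. -/
open FormalMultilinearSeries

lemma my_order_eq_of_series {𝕜 : Type*} [NontriviallyNormedField 𝕜] {E : Type*}
    [NormedAddCommGroup E] [NormedSpace 𝕜 E] {f : 𝕜 → E} {p : FormalMultilinearSeries 𝕜 𝕜 E}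
    {z₀ : 𝕜} (hp : HasFPowerSeriesAt f p z₀) (hne : p ≠ 0) (hf : AnalyticAt 𝕜 f z₀) :
    analyticOrderAt f z₀ = (p.order : ℕ∞) := by
  rw [hf.analyticOrderAt_eq_natCast]
  exact ⟨_, ⟨_, hp.has_fpower_series_iterate_dslope_fslope p.order⟩,
    hp.iterate_dslope_fslope_ne_zero hne, .of_forall hp.eq_pow_order_mul_iterate_dslope⟩

lemma my_series {H : Type*} [NormedAddCommGroup H] [InnerProductSpace ℂ H] [CompleteSpace H]
    (A : H →L[ℂ] H) (φ ψ : H) (μ : ℂ) (R : H →L[ℂ] H)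
    (hR1 : (A - μ • 1) * R = 1) (hR2 : R * (A - μ • 1) = 1)
    (F : ℂ → ℂ)
    (hF : ∀ z, F z = (inner ℂ φ ((Ring.inverse (A - z • 1) : H →L[ℂ] H) ψ) : ℂ) + 1) :
    HasFPowerSeriesAt F (ofScalars ℂ (fun n =>
      (inner ℂ φ ((R ^ (n+1) : H →L[ℂ] H) ψ) : ℂ) + if n = 0 then 1 else 0)) μ := by
  rw [hasFPowerSeriesAt_iff]
  rw [Metric.eventually_nhds_iff]
  have hrpos : (0:ℝ) < (‖R‖+1)⁻¹ := by positivity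
  refine ⟨(‖R‖+1)⁻¹, hrpos, fun y hy => ?_⟩
  simp only [dist_zero_right] at hy
  have hnorm : ‖y • R‖ < 1 := by
    rw [norm_smul]
    have h1 : ‖y‖ * ‖R‖ ≤ ‖y‖ * (‖R‖+1) := by nlinarith [norm_nonneg (y:ℂ), norm_nonneg R]
    have h2 : ‖y‖ * (‖R‖+1) < (‖R‖+1)⁻¹ * (‖R‖+1) := by
      have : (0:ℝ) < ‖R‖+1 := by positivity
      exact mul_lt_mul_of_pos_right hy this
    rw [inv_mul_cancel₀ (by positivity : (‖R‖:ℝ)+1 ≠ 0)] at h2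
    linarith
  have hgeo : HasSum (fun n => (y • R)^n) (Ring.inverse (1 - y • R)) :=
    hasSum_geom_series_inverse _ hnorm
  have hU : IsUnit (1 - y • R) := isUnit_one_sub_of_norm_lt_one hnorm
  have hfac : A - (μ + y) • 1 = (A - μ • 1) * (1 - y • R) := by
    rw [mul_sub, mul_one, mul_smul_comm, hR1, add_smul]; abel
  have hfac' : A - (μ + y) • 1 = (1 - y • R) * (A - μ • 1) := by
    rw [sub_mul, one_mul, smul_mul_assoc, hR2, add_smul]; abel
  have hcomm : R * (1 - y • R) = (1 - y • R) * R := by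
    rw [mul_sub, sub_mul, mul_one, one_mul, mul_smul_comm, smul_mul_assoc]
  have hT1 : (A - (μ + y) • 1) * (Ring.inverse (1 - y • R) * R) = 1 := by
    rw [hfac, mul_assoc, ← mul_assoc (1 - y • R), Ring.mul_inverse_cancel _ hU, one_mul, hR1]
  have hT2 : (Ring.inverse (1 - y • R) * R) * (A - (μ + y) • 1) = 1 := by
    rw [hfac', mul_assoc, ← mul_assoc R, hcomm, mul_assoc (1 - y•R), ← mul_assoc,
      Ring.inverse_mul_cancel _ hU, one_mul, hR2]
  have hinv : Ring.inverse (A - (μ + y) • 1) = Ring.inverse (1 - y • R) * R :=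
    Ring.inverse_unit ⟨_, _, hT1, hT2⟩
  have h2 : HasSum (fun n => (y • R)^n * R) (Ring.inverse (1 - y • R) * R) := hgeo.mul_right R
  set L : (H →L[ℂ] H) →L[ℂ] ℂ := (innerSL ℂ φ).comp (ContinuousLinearMap.apply ℂ H ψ) with hL
  have hLapp : ∀ X : H →L[ℂ] H, L X = (inner ℂ φ (X ψ) : ℂ) := fun X => rfl
  have h3 : HasSum (fun n => L ((y • R)^n * R)) (L (Ring.inverse (1 - y • R) * R)) := h2.mapL L
  have hLval : ∀ n, L ((y • R)^n * R) = y^n • (inner ℂ φ ((R ^ (n+1) : H →L[ℂ] H) ψ) : ℂ) := by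
    intro n
    have he : (y • R)^n * R = y^n • (R^(n+1)) := by rw [smul_pow, smul_mul_assoc, ← pow_succ]
    rw [he, map_smul, hLapp]
  have h4 : HasSum (fun n : ℕ => y^n • (if n = 0 then (1:ℂ) else 0)) 1 := by
    have he : (fun n : ℕ => y^n • (if n = 0 then (1:ℂ) else 0))
        = fun n : ℕ => if n = 0 then (1:ℂ) else 0 := by
      funext n; by_cases h : n = 0 <;> simp [h]
    rw [he]; exact hasSum_ite_eq 0 1
  have h5 := h3.add h4
  have hfun : (fun n => y ^ n • (ofScalars ℂ (fun n =>
        (inner ℂ φ ((R ^ (n+1) : H →L[ℂ] H) ψ) : ℂ) + if n = 0 then 1 else 0)).coeff n)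
      = fun n => L ((y • R)^n * R) + y^n • (if n = 0 then (1:ℂ) else 0) := by
    funext n
    rw [hLval]
    have hc : (ofScalars ℂ (fun n =>
        (inner ℂ φ ((R ^ (n+1) : H →L[ℂ] H) ψ) : ℂ) + if n = 0 then 1 else 0)).coeff n
        = (inner ℂ φ ((R ^ (n+1) : H →L[ℂ] H) ψ) : ℂ) + if n = 0 then 1 else 0 := by
      have h := ofScalars_apply_eq (E := ℂ) (fun n =>
        (inner ℂ φ ((R ^ (n+1) : H →L[ℂ] H) ψ) : ℂ) + if n = 0 then 1 else 0) (1 : ℂ) n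
      rw [FormalMultilinearSeries.coeff, show (1 : Fin n → ℂ) = fun _ => (1:ℂ) from rfl, h,
        one_pow, smul_eq_mul, mul_one]
    rw [hc, smul_add]
  rw [hfun, hF, hinv]
  rw [← hLapp]
  exact h5

/-- A Jordan chain of length `m` (vectors `y 0, …, y (m-1)`) of the operator `B`
at the eigenvalue `μ`. -/
def JordanChain {H : Type*} [NormedAddCommGroup H] [InnerProductSpace ℂ H]
    (B : H →L[ℂ] H) (μ : ℂ) (m : ℕ) (y : ℕ → H) : Prop :=
  y 0 ≠ 0 ∧ B (y 0) = μ • y 0 ∧ ∀ k, 1 ≤ k → k < m → B (y k) - μ • y k = y (k - 1)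

/-- For `A` bounded self-adjoint with simple discrete spectrum and
`B = A + ⟨·,φ⟩ψ`, the algebraic multiplicity (largest Jordan chain length) of an
eigenvalue `λ* ∈ ρ(A)` of `B` equals the order of `λ*` as a zero of the
characteristic function `F(λ) = ⟨(A−λ)⁻¹ψ,φ⟩ + 1`. -/
theorem stmt_7 {H : Type*} [NormedAddCommGroup H] [InnerProductSpace ℂ H] [CompleteSpace H]
    {ι : Type*} (v : HilbertBasis ι ℂ H) (lam : ι → ℝ) (hlam : Function.Injective lam)
    (A B : H →L[ℂ] H) (hA : IsSelfAdjoint A)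
    (hAv : ∀ i, A (v i) = (lam i : ℂ) • v i)
    (φ ψ : H)
    (hB : ∀ x, B x = A x + (inner ℂ φ x : ℂ) • ψ)
    (μ : ℂ) (R : H →L[ℂ] H)
    (hR1 : (A - μ • 1) * R = 1) (hR2 : R * (A - μ • 1) = 1)
    (heig : ∃ x, x ≠ 0 ∧ B x = μ • x)
    (F : ℂ → ℂ)
    (hF : ∀ z, F z = (inner ℂ φ ((Ring.inverse (A - z • 1) : H →L[ℂ] H) ψ) : ℂ) + 1)
    (hanal : AnalyticAt ℂ F μ)
    (m : ℕ)
    (hm : (∃ y, JordanChain B μ m y) ∧ ¬ ∃ y, JordanChain B μ (m + 1) y) :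
    analyticOrderAt F μ = (m : ℕ∞) := by
  -- basic operator facts
  have hsub : ∀ x : H, (A - μ • 1) x = A x - μ • x := fun x => by
    simp [ContinuousLinearMap.sub_apply]
  have hRleft : ∀ x, R ((A - μ • 1) x) = x := fun x => by
    have h := congrArg (fun T : H →L[ℂ] H => T x) hR2
    simpa [ContinuousLinearMap.mul_apply] using h
  have hRright : ∀ x, (A - μ • 1) (R x) = x := fun x => by
    have h := congrArg (fun T : H →L[ℂ] H => T x) hR1
    simpa [ContinuousLinearMap.mul_apply] using h
  have hψ : ψ ≠ 0 := by
    obtain ⟨x, hx0, hxB⟩ := heig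
    intro h0
    apply hx0
    have h1 : A x + (inner ℂ φ x : ℂ) • ψ = μ • x := ((hB x).symm.trans hxB)
    rw [h0, smul_zero, add_zero] at h1
    have h2 : (A - μ • 1) x = 0 := by rw [hsub, h1, sub_self]
    have := hRleft x
    rw [h2, map_zero] at this
    exact this.symm
  set b : ℕ → ℂ := fun k =>
    (inner ℂ φ ((R ^ (k+1) : H →L[ℂ] H) ψ) : ℂ) + if k = 0 then 1 else 0 with hbdef
  -- forward: a Jordan chain of length n forces the first n coefficients to vanish
  have hforward : ∀ n (y : ℕ → H), JordanChain B μ n y → ∀ k, k < n → b k = 0 := by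
    rintro n y ⟨hy0, hyB, hyk⟩
    set c : ℕ → ℂ := fun j => (inner ℂ φ (y j) : ℂ) with hcdef
    have hAy0 : (A - μ • 1) (y 0) = -(c 0 • ψ) := by
      have h1 : A (y 0) + c 0 • ψ = μ • y 0 := ((hB (y 0)).symm.trans hyB)
      rw [hsub, ← h1]; abel
    have hrep : ∀ k, k < n →
        y k = -∑ j ∈ Finset.range (k+1), c j • ((R ^ (k+1-j) : H →L[ℂ] H) ψ) := by
      intro k
      induction k with
      | zero =>
        intro _
        have h3 : y 0 = R (-(c 0 • ψ)) := by rw [← hAy0, hRleft]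
        rw [h3]
        simp [Finset.sum_range_one, pow_one]
      | succ k ih =>
        intro hk1
        have hk0 : k < n := Nat.lt_of_succ_lt hk1
        have h4 := hyk (k+1) (Nat.le_add_left 1 k) hk1
        simp only [Nat.add_sub_cancel] at h4
        have h5 : (A - μ • 1) (y (k+1)) = y k - c (k+1) • ψ := by
          have h6 : A (y (k+1)) + c (k+1) • ψ - μ • y (k+1) = y k := by
            rw [← hB (y (k+1))]; exact h4
          rw [hsub, ← h6]; abel
        have h7 : y (k+1) = R (y k) - c (k+1) • R ψ := by
          calc y (k+1) = R ((A - μ • 1) (y (k+1))) := (hRleft _).symm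
          _ = R (y k - c (k+1) • ψ) := by rw [h5]
          _ = R (y k) - c (k+1) • R ψ := by rw [map_sub, map_smul]
        rw [h7, ih hk0, map_neg, map_sum, Finset.sum_range_succ _ (k+1)]
        have hterm : ∀ j ∈ Finset.range (k+1),
            R (c j • ((R ^ (k+1-j) : H →L[ℂ] H) ψ)) = c j • ((R ^ (k+2-j) : H →L[ℂ] H) ψ) := by
          intro j hj
          rw [map_smul]
          congr 1
          have hj' : j ≤ k := Nat.lt_succ_iff.mp (Finset.mem_range.mp hj)
          have he : k+2-j = (k+1-j)+1 := by omega
          rw [he, pow_succ', ContinuousLinearMap.mul_apply]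
        rw [Finset.sum_congr rfl hterm]
        have he2 : k+2-(k+1) = 1 := by omega
        rw [he2, pow_one]
        abel
    have hrel : ∀ k, k < n → ∑ j ∈ Finset.range (k+1), c j * b (k-j) = 0 := by
      intro k hk
      have h9 := congrArg (fun x : H => (inner ℂ φ x : ℂ)) (hrep k hk)
      simp only [inner_neg_right, inner_sum, inner_smul_right] at h9
      have hsplit : ∀ j ∈ Finset.range (k+1), c j * b (k-j)
          = c j * (inner ℂ φ ((R ^ (k+1-j) : H →L[ℂ] H) ψ) : ℂ)
            + if j = k then c k else 0 := by
        intro j hj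
        have hj' : j ≤ k := Nat.lt_succ_iff.mp (Finset.mem_range.mp hj)
        have h10 : (k-j)+1 = k+1-j := by omega
        by_cases hjk : j = k
        · subst hjk
          rw [hbdef]
          simp only [Nat.sub_self, if_pos rfl]
          rw [show j + 1 - j = 0 + 1 from by omega]
          simp only [if_true, eq_self_iff_true]
          ring
        · have hne : k - j ≠ 0 := by omega
          simp only [hbdef, if_neg hne, if_neg hjk, h10, add_zero]
      rw [Finset.sum_congr rfl hsplit, Finset.sum_add_distrib, Finset.sum_ite_eq']
      rw [if_pos (Finset.self_mem_range_succ k)]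
      rw [show (c k : ℂ) = (inner ℂ φ (y k) : ℂ) from rfl, h9]
      exact add_neg_cancel _
    intro k
    induction k using Nat.strong_induction_on with
    | _ k ih =>
      intro hk
      have hn : 0 < n := lt_of_le_of_lt (Nat.zero_le k) hk
      have hc0 : c 0 ≠ 0 := by
        intro h0
        apply hy0
        have h := hrep 0 hn
        simpa [Finset.sum_range_one, h0] using h
      have h11 := hrel k hk
      rw [Finset.sum_range_succ'] at h11
      have hz : ∀ i ∈ Finset.range k, c (i+1) * b (k-(i+1)) = 0 := by
        intro i hi
        have hi' : i < k := Finset.mem_range.mp hi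
        have hb0 : b (k-(i+1)) = 0 := ih (k-(i+1)) (by omega) (by omega)
        rw [hb0, mul_zero]
      rw [Finset.sum_congr rfl hz, Finset.sum_const_zero, zero_add, Nat.sub_zero] at h11
      exact (mul_eq_zero.mp h11).resolve_left hc0
  -- backward: vanishing of the first m+1 coefficients produces a chain of length m+1
  have hbackward : (∀ k, k < m+1 → b k = 0) → ∃ y, JordanChain B μ (m+1) y := by
    intro hb
    refine ⟨fun k => -((R ^ (k+1) : H →L[ℂ] H) ψ), ?_, ?_, ?_⟩
    · intro h0
      rw [neg_eq_zero, pow_one] at h0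
      apply hψ
      have := hRright ψ
      rw [h0, map_zero] at this
      exact this.symm
    · have h0 := hb 0 (by omega)
      rw [hbdef] at h0
      simp only [if_pos rfl] at h0
      have hi : (inner ℂ φ ((R ^ 1 : H →L[ℂ] H) ψ) : ℂ) = -1 := by
        have : (inner ℂ φ ((R ^ (0+1) : H →L[ℂ] H) ψ) : ℂ) + 1 = 0 := h0
        linear_combination this
      rw [hB]
      rw [inner_neg_right, hi, neg_neg, one_smul]
      have e1 : A ((R ^ 1 : H →L[ℂ] H) ψ) - μ • ((R ^ 1 : H →L[ℂ] H) ψ) = ψ := by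
        rw [← hsub, pow_one]; exact hRright ψ
      rw [map_neg, smul_neg]
      nth_rewrite 2 [← e1]
      abel
    · intro k hk1 hkm
      obtain ⟨j, rfl⟩ : ∃ j, k = j + 1 := ⟨k-1, by omega⟩
      have hak : (inner ℂ φ ((R ^ (j+1+1) : H →L[ℂ] H) ψ) : ℂ) = 0 := by
        have h := hb (j+1) (by omega)
        rw [hbdef] at h
        simpa using h
      have e2 : (A - μ • 1) ((R ^ (j+1+1) : H →L[ℂ] H) ψ) = (R ^ (j+1) : H →L[ℂ] H) ψ := by
        rw [pow_succ', ContinuousLinearMap.mul_apply, hRright]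
      simp only [Nat.add_sub_cancel]
      rw [hB]
      rw [inner_neg_right, hak, neg_zero, zero_smul, add_zero]
      have e3 : A (-((R ^ (j+1+1) : H →L[ℂ] H) ψ)) - μ • (-((R ^ (j+1+1) : H →L[ℂ] H) ψ))
          = -((A - μ • 1) ((R ^ (j+1+1) : H →L[ℂ] H) ψ)) := by
        rw [hsub, map_neg, smul_neg]; abel
      rw [e3, e2]
  -- combine
  have hblt : ∀ k, k < m → b k = 0 := by
    obtain ⟨y, hy⟩ := hm.1
    exact hforward m y hy
  have hbm : b m ≠ 0 := by
    intro h0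
    apply hm.2
    apply hbackward
    intro k hk
    rcases Nat.lt_or_ge k m with h | h
    · exact hblt k h
    · have : k = m := by omega
      rw [this]; exact h0
  have hps : HasFPowerSeriesAt F (ofScalars ℂ (fun n =>
      (inner ℂ φ ((R ^ (n+1) : H →L[ℂ] H) ψ) : ℂ) + if n = 0 then 1 else 0)) μ :=
    my_series A φ ψ μ R hR1 hR2 F hF
  rw [← hbdef] at hps
  have hpne : ofScalars ℂ b ≠ 0 := by
    intro h0
    apply hbm
    have := (ofScalars_series_eq_zero (𝕜 := ℂ) ℂ).mp h0
    rw [this]; rfl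
  have hmmem : (ofScalars ℂ b) m ≠ 0 :=
    fun h => hbm ((ofScalars_eq_zero (𝕜 := ℂ) ℂ m).mp h)
  have horder : (ofScalars ℂ b).order = m := by
    have h1 : (ofScalars ℂ b).order ≤ m := Nat.sInf_le hmmem
    have h2 : ¬ (ofScalars ℂ b).order < m := by
      intro h
      exact (ofScalars ℂ b).apply_order_ne_zero hpne
        (ofScalars_eq_zero_of_scalar_zero ℂ (hblt _ h))
    exact le_antisymm h1 (not_lt.mp h2)
  rw [my_order_eq_of_series hps hpne hanal, horder]
end

section
/- Let A be an n×n Hermitian matrix with pairwise distinct eigenvalues λ₁,…,λₙ and orthonormal eigenvectors v₁,…,vₙ, and let φ ∈ ℂⁿ satisfy ⟨φ, vₖ⟩ ≠ 0 for all k. Then for any pairwise distinct complex numbers z₁,…,z_k and positive integers m₁,…,m_k with m₁+⋯+m_k = n, there exists a unique vector ψ ∈ ℂⁿ such that the characteristic polynomial of B = A + ψφ* equals ∏_{j=1}^k (z − zⱼ)^{mⱼ} (i.e. B has eigenvalues zⱼ of algebraic multiplicity mⱼ). -/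
open Polynomial Finset

lemma det_diag_add_rank_one {n : ℕ} (d a c : Fin n → ℂ) (hd : ∀ i, d i ≠ 0) :
    (Matrix.diagonal d + Matrix.replicateCol (Fin 1) a * Matrix.replicateRow (Fin 1) c).det
      = (∏ i, d i) + ∑ k, a k * c k * ∏ i ∈ Finset.univ.erase k, d i := by
  have key : Matrix.diagonal d + Matrix.replicateCol (Fin 1) a * Matrix.replicateRow (Fin 1) c
      = Matrix.diagonal d *
        (1 + Matrix.replicateCol (Fin 1) (fun i => (d i)⁻¹ * a i) * Matrix.replicateRow (Fin 1) c) := by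
    ext i j
    simp only [Matrix.add_apply, Matrix.mul_apply, Matrix.replicateCol_apply, Matrix.replicateRow_apply,
      Matrix.diagonal_apply, Matrix.one_apply, Fin.sum_univ_one]
    rw [Finset.sum_eq_single i (by intro b _ hb; simp [Ne.symm hb]) (by simp)]
    simp only [if_pos rfl, ↓reduceIte]
    by_cases h : i = j
    · subst h; field_simp [hd i]; simp
    · simp only [if_neg h, zero_add]
      field_simp [hd i]
  erw [key, Matrix.det_mul, Matrix.det_diagonal, Matrix.det_one_add_replicateCol_mul_replicateRow (ι := Fin 1),
    dotProduct, mul_add, mul_one, Finset.mul_sum]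
  congr 1
  refine Finset.sum_congr rfl fun k _ => ?_
  rw [← Finset.mul_prod_erase _ _ (Finset.mem_univ k),
    show (d k * ∏ x ∈ Finset.univ.erase k, d x) * (c k * ((d k)⁻¹ * a k))
      = d k * (d k)⁻¹ * (a k * c k * ∏ x ∈ Finset.univ.erase k, d x) by ring,
    mul_inv_cancel₀ (hd k), one_mul]

lemma charpoly_diag_add_rank_one {n : ℕ} (μ a c : Fin n → ℂ) :
    (Matrix.diagonal μ + Matrix.replicateCol (Fin 1) a * Matrix.replicateRow (Fin 1) c).charpoly
      = (∏ i, (X - C (μ i)))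
        - ∑ k, C (a k * c k) * ∏ i ∈ Finset.univ.erase k, (X - C (μ i)) := by
  apply Polynomial.eq_of_infinite_eval_eq
  apply ((Set.finite_range μ).infinite_compl).mono
  intro x hx
  simp only [Set.mem_compl_iff, Set.mem_range, not_exists] at hx
  have hd : ∀ i, x - μ i ≠ 0 := fun i => sub_ne_zero.mpr (fun h => hx i h.symm)
  simp only [Set.mem_setOf_eq]
  rw [Matrix.charpoly]
  rw [show Polynomial.eval x ((Matrix.charmatrix _).det)
      = ((Matrix.charmatrix (Matrix.diagonal μ + Matrix.replicateCol (Fin 1) a * Matrix.replicateRow (Fin 1) c)).map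
          (Polynomial.evalRingHom x)).det from RingHom.map_det (Polynomial.evalRingHom x) _]
  have hmap : (Matrix.charmatrix (Matrix.diagonal μ + Matrix.replicateCol (Fin 1) a
        * Matrix.replicateRow (Fin 1) c)).map (Polynomial.evalRingHom x)
      = Matrix.diagonal (fun i => x - μ i)
        + Matrix.replicateCol (Fin 1) (fun i => -a i) * Matrix.replicateRow (Fin 1) c := by
    ext i j
    by_cases h : i = j
    · subst h
      simp [Matrix.charmatrix_apply_eq, Matrix.mul_apply, Fin.sum_univ_one]
      ring
    · simp [Matrix.charmatrix_apply_ne _ _ _ h, Matrix.mul_apply, Fin.sum_univ_one,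
        Matrix.diagonal_apply_ne _ h, h]
  rw [hmap, det_diag_add_rank_one _ _ _ hd]
  have h1 : (∑ k, (fun i => -a i) k * c k * ∏ i ∈ Finset.univ.erase k, (x - μ i))
      = -∑ k, (a k * c k) * ∏ i ∈ Finset.univ.erase k, (x - μ i) := by
    rw [← Finset.sum_neg_distrib]
    exact Finset.sum_congr rfl fun k _ => by ring
  rw [h1]
  simp only [eval_sub, eval_prod, eval_finset_sum, eval_mul, eval_C, eval_X]
  ring

set_option maxHeartbeats 2000000 in
/-- Let `A` be Hermitian on `ℂⁿ` with pairwise distinct eigenvalues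
`λₖ` and orthonormal eigenvectors `vₖ`, and let `φ` satisfy `⟨φ,vₖ⟩ ≠ 0` for all `k`
(the generic set). Then for pairwise distinct `z₁,…,z_k` and multiplicities with
`m₁+⋯+m_k = n` there is a unique `ψ` such that `B = A + ψφ*` has characteristic
polynomial `∏ⱼ (X − zⱼ)^{mⱼ}`. -/
theorem stmt_12 (n : ℕ)
    (A : EuclideanSpace ℂ (Fin n) →L[ℂ] EuclideanSpace ℂ (Fin n))
    (hA : IsSelfAdjoint A)
    (lam : Fin n → ℝ) (hlam : Function.Injective lam)
    (v : Fin n → EuclideanSpace ℂ (Fin n)) (hv : Orthonormal ℂ v)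
    (hAv : ∀ k, A (v k) = (lam k : ℂ) • v k)
    (φ : EuclideanSpace ℂ (Fin n)) (hφ : ∀ k, (inner ℂ (v k) φ : ℂ) ≠ 0)
    (K : ℕ) (z : Fin K → ℂ) (hz : Function.Injective z)
    (m : Fin K → ℕ) (hm : ∀ j, 0 < m j) (hsum : ∑ j, m j = n) :
    ∃! ψ : EuclideanSpace ℂ (Fin n),
      LinearMap.charpoly
          ((A + (innerSL ℂ φ).smulRight ψ : EuclideanSpace ℂ (Fin n) →L[ℂ] EuclideanSpace ℂ (Fin n)) :
            EuclideanSpace ℂ (Fin n) →ₗ[ℂ] EuclideanSpace ℂ (Fin n))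
        = ∏ j, (Polynomial.X - Polynomial.C (z j)) ^ m j := by
  classical
  have hcard : Fintype.card (Fin n) = Module.finrank ℂ (EuclideanSpace ℂ (Fin n)) := by simp
  have hsp : ⊤ ≤ Submodule.span ℂ (Set.range v) :=
    (hv.linearIndependent.span_eq_top_of_card_eq_finrank' hcard).ge
  let ob : OrthonormalBasis (Fin n) ℂ (EuclideanSpace ℂ (Fin n)) := OrthonormalBasis.mk hv hsp
  have hob : ∀ i, ob i = v i := fun i => by simp [ob]
  let b := ob.toBasis
  have hb : ∀ i, b i = v i := fun i => by
    rw [show (b : Fin n → _) i = ob i from congrFun ob.coe_toBasis i, hob]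
  have hrepr : ∀ (x : EuclideanSpace ℂ (Fin n)) i, b.repr x i = (inner ℂ (v i) x : ℂ) := by
    intro x i
    rw [show b.repr x i = ob.repr x i from ob.coe_toBasis_repr_apply x i,
      OrthonormalBasis.repr_apply_apply, hob]
  set lam' : Fin n → ℂ := fun i => (lam i : ℂ) with hlam'
  have hlam'inj : Function.Injective lam' := by
    intro i j h
    apply hlam
    have h2 : ((lam i : ℂ)) = ((lam j : ℂ)) := h
    exact_mod_cast h2
  set c : Fin n → ℂ := fun k => (inner ℂ φ (v k) : ℂ) with hcdef
  have hcne : ∀ k, c k ≠ 0 := by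
    intro k h
    apply hφ k
    have h2 := congrArg (starRingEnd ℂ) h
    rwa [inner_conj_symm, map_zero] at h2
  set q : Polynomial ℂ := ∏ j, (X - C (z j)) ^ m j with hqdef
  set p : Polynomial ℂ := ∏ i, (X - C (lam' i)) with hpdef
  set P : Fin n → Polynomial ℂ := fun k => ∏ i ∈ Finset.univ.erase k, (X - C (lam' i)) with hPdef
  -- the characteristic polynomial formula
  have hchar : ∀ ψ : EuclideanSpace ℂ (Fin n),
      LinearMap.charpoly
          ((A + (innerSL ℂ φ).smulRight ψ : EuclideanSpace ℂ (Fin n) →L[ℂ] EuclideanSpace ℂ (Fin n)) :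
            EuclideanSpace ℂ (Fin n) →ₗ[ℂ] EuclideanSpace ℂ (Fin n))
        = p - ∑ k, C ((inner ℂ (v k) ψ : ℂ) * c k) * P k := by
    intro ψ
    rw [← LinearMap.charpoly_toMatrix _ b]
    have hM : LinearMap.toMatrix b b
          ((A + (innerSL ℂ φ).smulRight ψ : EuclideanSpace ℂ (Fin n) →L[ℂ] EuclideanSpace ℂ (Fin n)) :
            EuclideanSpace ℂ (Fin n) →ₗ[ℂ] EuclideanSpace ℂ (Fin n))
        = Matrix.diagonal lam'
          + Matrix.replicateCol (Fin 1) (fun i => (inner ℂ (v i) ψ : ℂ)) * Matrix.replicateRow (Fin 1) c := by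
      ext i j
      rw [LinearMap.toMatrix_apply, hb]
      have happ : ((A + (innerSL ℂ φ).smulRight ψ : EuclideanSpace ℂ (Fin n) →L[ℂ] EuclideanSpace ℂ (Fin n)) :
            EuclideanSpace ℂ (Fin n) →ₗ[ℂ] EuclideanSpace ℂ (Fin n)) (v j)
          = (lam j : ℂ) • v j + (inner ℂ φ (v j) : ℂ) • ψ := by
        simp [hAv j]
      rw [happ, map_add, map_smul, map_smul, Finsupp.add_apply, Finsupp.smul_apply,
        Finsupp.smul_apply, hrepr, hrepr]
      have hvv : (inner ℂ (v i) (v j) : ℂ) = if i = j then 1 else 0 := orthonormal_iff_ite.mp hv i j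
      rw [hvv]
      simp only [Matrix.add_apply, Matrix.diagonal_apply, Matrix.mul_apply, Matrix.replicateCol_apply,
        Matrix.replicateRow_apply, Fin.sum_univ_one, smul_eq_mul, hcdef]
      by_cases h : i = j <;> simp [h, mul_comm, hlam']
    rw [hM, charpoly_diag_add_rank_one, hpdef, hPdef]
  -- degree facts
  have hpm : p.Monic := monic_prod_of_monic _ _ fun i _ => monic_X_sub_C _
  have hqm : q.Monic := monic_prod_of_monic _ _ fun j _ => (monic_X_sub_C _).pow _
  have hpnat : p.natDegree = n := by
    rw [hpdef, Polynomial.natDegree_prod _ _ (fun i _ => X_sub_C_ne_zero _)]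
    simp
  have hqnat : q.natDegree = n := by
    rw [hqdef, Polynomial.natDegree_prod _ _ (fun j _ => pow_ne_zero _ (X_sub_C_ne_zero _))]
    simp [Polynomial.natDegree_pow, hsum]
  have hrdeg : (p - q).degree < (n : ℕ) := by
    rcases eq_or_ne p q with h | h
    · simp only [h, sub_self, Polynomial.degree_zero]
      exact WithBot.bot_lt_coe n
    · calc (p - q).degree < p.degree := Polynomial.degree_sub_lt
            (by rw [Polynomial.degree_eq_natDegree hpm.ne_zero,
                Polynomial.degree_eq_natDegree hqm.ne_zero, hpnat, hqnat])
            hpm.ne_zero (by rw [hpm.leadingCoeff, hqm.leadingCoeff])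
        _ = (n : ℕ) := by rw [Polynomial.degree_eq_natDegree hpm.ne_zero, hpnat]
  set r : Polynomial ℂ := p - q with hrdef
  -- evaluation helpers
  have hPj : ∀ j, Polynomial.eval (lam' j) (P j) ≠ 0 := by
    intro j
    rw [hPdef]
    simp only [Polynomial.eval_prod, Polynomial.eval_sub, Polynomial.eval_X, Polynomial.eval_C]
    exact Finset.prod_ne_zero_iff.mpr fun i hi =>
      sub_ne_zero.mpr fun h => (Finset.mem_erase.mp hi).1 (hlam'inj h).symm
  have hPeval : ∀ j k, k ≠ j → Polynomial.eval (lam' j) (P k) = 0 := by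
    intro j k hkj
    rw [hPdef]
    simp only [Polynomial.eval_prod]
    exact Finset.prod_eq_zero (Finset.mem_erase.mpr ⟨Ne.symm hkj, Finset.mem_univ j⟩) (by simp)
  have hSeval : ∀ (w : Fin n → ℂ) j,
      Polynomial.eval (lam' j) (∑ k, C (w k) * P k) = w j * Polynomial.eval (lam' j) (P j) := by
    intro w j
    rw [Polynomial.eval_finset_sum]
    rw [Finset.sum_eq_single j
      (fun k _ hk => by rw [Polynomial.eval_mul, hPeval j k hk, mul_zero]) (by simp)]
    rw [Polynomial.eval_mul, Polynomial.eval_C]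
  have hSdeg : ∀ w : Fin n → ℂ, (∑ k, C (w k) * P k).degree < (n : ℕ) := by
    intro w
    refine lt_of_le_of_lt (Polynomial.degree_sum_le _ _) ?_
    refine (Finset.sup_lt_iff (WithBot.bot_lt_coe (n : ℕ))).mpr ?_
    intro k _
    refine lt_of_le_of_lt (Polynomial.degree_mul_le _ _) ?_
    have h1 : (C (w k)).degree ≤ 0 := Polynomial.degree_C_le
    have h2 : (P k).degree ≤ ((n - 1 : ℕ) : WithBot ℕ) := by
      rw [hPdef]
      refine le_trans (Polynomial.degree_prod_le _ _) (le_of_eq ?_)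
      calc ∑ i ∈ Finset.univ.erase k, (X - C (lam' i)).degree
          = ∑ i ∈ Finset.univ.erase k, (1 : WithBot ℕ) :=
            Finset.sum_congr rfl fun i _ => Polynomial.degree_X_sub_C _
        _ = ((n - 1 : ℕ) : WithBot ℕ) := by
            rw [Finset.sum_const, Finset.card_erase_of_mem (Finset.mem_univ k),
              Finset.card_univ, Fintype.card_fin]
            simp [nsmul_eq_mul]
    calc (C (w k)).degree + (P k).degree ≤ 0 + ((n - 1 : ℕ) : WithBot ℕ) := add_le_add h1 h2
      _ = ((n - 1 : ℕ) : WithBot ℕ) := zero_add _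
      _ < (n : ℕ) := by exact_mod_cast Nat.sub_lt k.pos one_pos
  -- coefficient extraction / uniqueness of coefficients
  have hcoeff : ∀ w w' : Fin n → ℂ,
      (∑ k, C (w k) * P k) = (∑ k, C (w' k) * P k) → w = w' := by
    intro w w' h
    funext j
    have h2 := congrArg (Polynomial.eval (lam' j)) h
    rw [hSeval, hSeval] at h2
    exact mul_right_cancel₀ (hPj j) h2
  -- the solution
  set a0 : Fin n → ℂ :=
    fun k => Polynomial.eval (lam' k) r / (c k * Polynomial.eval (lam' k) (P k)) with ha0
  set ψ0 : EuclideanSpace ℂ (Fin n) := ∑ k, a0 k • v k with hψ0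
  have hinner0 : ∀ i, (inner ℂ (v i) ψ0 : ℂ) = a0 i := by
    intro i
    rw [hψ0, inner_sum]
    rw [Finset.sum_eq_single i (fun k _ hk => by
      rw [inner_smul_right, orthonormal_iff_ite.mp hv i k, if_neg (Ne.symm hk), mul_zero])
      (by simp)]
    rw [inner_smul_right, orthonormal_iff_ite.mp hv i i, if_pos rfl, mul_one]
  have hS0 : (∑ k, C (a0 k * c k) * P k) = r := by
    refine Polynomial.eq_of_degrees_lt_of_eval_index_eq (v := lam') Finset.univ
      (fun i _ j _ h => hlam'inj h) ?_ ?_ ?_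
    · simp only [Finset.card_univ, Fintype.card_fin]
      exact hSdeg _
    · simp only [Finset.card_univ, Fintype.card_fin]
      exact hrdeg
    · intro j _
      rw [hSeval]
      simp only [ha0]
      rw [mul_assoc]
      exact div_mul_cancel₀ _ (mul_ne_zero (hcne j) (hPj j))
  refine ⟨ψ0, ?_, ?_⟩
  · refine (hchar ψ0).trans ?_
    simp only [hinner0]
    rw [hS0, hrdef]
    ring
  · intro ψ' hψ'
    have hψ2 : p - ∑ k, C ((inner ℂ (v k) ψ' : ℂ) * c k) * P k = q := (hchar ψ').symm.trans hψ'
    have hS' : (∑ k, C ((inner ℂ (v k) ψ' : ℂ) * c k) * P k) = r := by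
      rw [hrdef]
      linear_combination -hψ2
    have hkey : ∀ i, (inner ℂ (v i) ψ' : ℂ) = a0 i := by
      have h3 := hcoeff _ _ (hS'.trans hS0.symm)
      intro i
      exact mul_right_cancel₀ (hcne i) (congrFun h3 i)
    calc ψ' = ∑ i, (inner ℂ (v i) ψ' : ℂ) • v i := by
          have h4 := ob.sum_repr' ψ'
          simp only [hob] at h4
          exact h4.symm
      _ = ∑ i, a0 i • v i := Finset.sum_congr rfl fun i _ => by rw [hkey i]
      _ = ψ0 := hψ0.symm
end

section
/- Let A be a bounded self-adjoint operator with simple discrete spectrum, unit eigenvector vₙ for the eigenvalue λₙ, and B = A + ⟨·,φ⟩ψ with bₙ := ⟨ψ,vₙ⟩ = 0 and aₙ := ⟨φ,vₙ⟩ ≠ 0. If λₙ is an eigenvalue of B admitting an associated vector (i.e. a Jordan chain of length ≥ 2), then F(λₙ) = 0, where F(λ) = ⟨(Aₙ−λ)⁻¹Pₙψ, φ⟩ + 1 with Pₙ the orthogonal projection onto Hₙ = {vₙ}^⊥ and Aₙ the restriction of A to Hₙ. -/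
/-- Suppose `bₙ = ⟨ψ,vₙ⟩ = 0` and `aₙ = ⟨φ,vₙ⟩ ≠ 0`.  If `λₙ` is an
eigenvalue of `B = A + ⟨·,φ⟩ψ` with an associated vector (Jordan chain of
length ≥ 2), then `F(λₙ) = ⟨(Aₙ−λₙ)⁻¹Pₙψ, φ⟩ + 1 = 0`; here the vector
`u = (Aₙ−λₙ)⁻¹Pₙψ` is characterized by `u ⊥ vₙ` and `(A−λₙ)u = ψ` (note
`Pₙψ = ψ` since `bₙ = 0`). -/
theorem stmt_17 {H : Type*} [NormedAddCommGroup H] [InnerProductSpace ℂ H] [CompleteSpace H]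
    {ι : Type*} (v : HilbertBasis ι ℂ H) (lam : ι → ℝ) (hlam : Function.Injective lam)
    (A B : H →L[ℂ] H) (hA : IsSelfAdjoint A)
    (hAv : ∀ i, A (v i) = (lam i : ℂ) • v i)
    (φ ψ : H)
    (hB : ∀ x, B x = A x + (inner ℂ φ x : ℂ) • ψ)
    (n : ι) (hbn : (inner ℂ (v n : H) ψ : ℂ) = 0) (han : (inner ℂ (v n : H) φ : ℂ) ≠ 0)
    (hassoc : ∃ y0 y1 : H, y0 ≠ 0 ∧ B y0 = (lam n : ℂ) • y0 ∧
      B y1 - (lam n : ℂ) • y1 = y0)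
    (u : H) (hu : u ∈ (Submodule.span ℂ {(v n : H)})ᗮ)
    (hAu : A u - (lam n : ℂ) • u = ψ) :
    (inner ℂ φ u : ℂ) + 1 = 0 := by
  obtain ⟨y0, y1, hy0ne, hBy0, hBy1⟩ := hassoc
  have hsym : (A : H →ₗ[ℂ] H).IsSymmetric := hA.isSymmetric
  set c : ℂ := (inner ℂ φ y0 : ℂ) with hc
  -- A y0 = λ • y0 - c • ψ
  have hA0 : A y0 = (lam n : ℂ) • y0 - c • ψ := by
    have h := hB y0
    rw [h] at hBy0
    exact eq_sub_of_add_eq hBy0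
  have hA1 : A u = ψ + (lam n : ℂ) • u := by
    rw [← hAu]; abel
  set w : H := y0 + c • u with hw
  have hAw : A w = (lam n : ℂ) • w := by
    rw [hw, map_add, map_smul, hA0, hA1, smul_add, smul_add, smul_smul, smul_smul,
      mul_comm]
    abel
  -- ⟪v n, u⟫ = 0
  have hvnu : (inner ℂ (v n : H) u : ℂ) = 0 :=
    hu (v n) (Submodule.mem_span_singleton_self _)
  -- ⟪v n, y0⟫ = 0
  have hvny0 : (inner ℂ (v n : H) y0 : ℂ) = 0 := by
    have h := hB y1
    have h2 : y0 = A y1 + (inner ℂ φ y1 : ℂ) • ψ - (lam n : ℂ) • y1 := by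
      rw [← hBy1, h]
    have hvnAy1 : (inner ℂ (v n : H) (A y1) : ℂ) = (lam n : ℂ) * inner ℂ (v n : H) y1 := by
      have h3 := hsym (v n) y1
      simp only [ContinuousLinearMap.coe_coe] at h3
      rw [← h3, hAv n, inner_smul_left, Complex.conj_ofReal]
    rw [h2, inner_sub_right, inner_add_right, inner_smul_right, inner_smul_right,
      hvnAy1, hbn]
    ring
  -- all inner products with basis vectors vanish
  have hcoord : ∀ i, (inner ℂ (v i : H) w : ℂ) = 0 := by
    intro i
    by_cases hi : i = n
    · subst hi
      rw [hw, inner_add_right, inner_smul_right, hvny0, hvnu]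
      ring
    · have key : (lam i : ℂ) * inner ℂ (v i : H) w = (lam n : ℂ) * inner ℂ (v i : H) w := by
        have h1 : (inner ℂ (v i : H) (A w) : ℂ) = (lam i : ℂ) * inner ℂ (v i : H) w := by
          have h3 := hsym (v i) w
          simp only [ContinuousLinearMap.coe_coe] at h3
          rw [← h3, hAv i, inner_smul_left, Complex.conj_ofReal]
        have h2 : (inner ℂ (v i : H) (A w) : ℂ) = (lam n : ℂ) * inner ℂ (v i : H) w := by
          rw [hAw, inner_smul_right]
        rw [← h1, h2]
      have hne : (lam i : ℂ) - (lam n : ℂ) ≠ 0 := by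
        intro h0
        apply hi
        apply hlam
        exact_mod_cast sub_eq_zero.mp h0
      have := mul_eq_zero.mp (by linear_combination key : ((lam i : ℂ) - lam n) *
        inner ℂ (v i : H) w = 0)
      tauto
  -- hence w = 0
  have hw0 : w = 0 := by
    have : v.repr w = 0 := by
      apply lp.ext
      funext i
      simpa [HilbertBasis.repr_apply_apply] using hcoord i
    simpa using v.repr.map_eq_zero_iff.mp this
  have hy0 : y0 = -(c • u) := by
    rw [eq_neg_iff_add_eq_zero]; rw [hw] at hw0; exact hw0
  have hcne : c ≠ 0 := by
    intro h0
    apply hy0ne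
    rw [hy0, h0, zero_smul, neg_zero]
  have hkey : c = -(c * inner ℂ φ u) := by
    rw [hc]
    nth_rewrite 1 [hy0]
    rw [inner_neg_right, inner_smul_right]
  have : c * ((inner ℂ φ u : ℂ) + 1) = 0 := by linear_combination hkey
  rcases mul_eq_zero.mp this with h | h
  · exact absurd h hcne
  · exact h
end

section
/- Let A be a self-adjoint operator with simple discrete spectrum {λₙ}_{n∈I} satisfying inf_n |λ_{n+1} − λₙ| = d > 0, and let B = A + ⟨·,φ⟩ψ. Then for every ε > 0 there exists N > 0 such that every z ∈ ℂ with |Re z| ≥ N and dist(z, spec(A)) ≥ ε satisfies |F(z)| ≥ 1/2, where F(z) = Σₙ conj(aₙ)bₙ/(λₙ − z) + 1; consequently all such z lie in the resolvent set of B. -/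
open scoped ComplexConjugate ENNReal InnerProductSpace

noncomputable section

namespace Stmt18Aux

local notation "⟪" x ", " y "⟫" => @inner ℂ _ _ x y


variable {H : Type*} [NormedAddCommGroup H] [InnerProductSpace ℂ H] [CompleteSpace H]

lemma rpow2 (x : ℝ) : x ^ ((2:ℝ≥0∞)).toReal = x ^ (2:ℕ) := by
  rw [show ((2:ℝ≥0∞)).toReal = ((2:ℕ):ℝ) by norm_num, Real.rpow_natCast]

lemma memℓp_mul {w : ℤ → ℂ} {C : ℝ} (hw : ∀ n, ‖w n‖ ≤ C) (f : lp (fun _ : ℤ => ℂ) 2) :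
    Memℓp (fun n => w n * f n) 2 := by
  have hC : 0 ≤ C := le_trans (norm_nonneg _) (hw 0)
  apply memℓp_gen
  have hf : Summable fun n => ‖f n‖ ^ ((2:ℝ≥0∞)).toReal := (lp.memℓp f).summable (by norm_num)
  refine Summable.of_nonneg_of_le (fun n => ?_) (fun n => ?_) (hf.mul_left (C ^ (2:ℕ)))
  · have := rpow2 ‖w n * f n‖; positivity
  · rw [rpow2, rpow2]
    have h1 : ‖w n * f n‖ = ‖w n‖ * ‖f n‖ := norm_mul _ _
    have h2 := hw n
    rw [h1, mul_pow]
    exact mul_le_mul_of_nonneg_right (pow_le_pow_left₀ (norm_nonneg _) h2 2) (by positivity)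

def mulLM (w : ℤ → ℂ) (C : ℝ) (hw : ∀ n, ‖w n‖ ≤ C) :
    lp (fun _ : ℤ => ℂ) 2 →ₗ[ℂ] lp (fun _ : ℤ => ℂ) 2 where
  toFun f := ⟨fun n => w n * f n, memℓp_mul hw f⟩
  map_add' f g := by
    ext n
    simp only [lp.coeFn_add, Pi.add_apply]
    change w n * (f + g) n = w n * f n + w n * g n
    rw [lp.coeFn_add]
    simp [mul_add]
  map_smul' c f := by
    ext n
    simp only [lp.coeFn_smul, Pi.smul_apply, RingHom.id_apply]
    change w n * (c • f) n = c • (w n * f n)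
    rw [lp.coeFn_smul]
    simp [smul_eq_mul]
    ring

lemma mulLM_apply (w : ℤ → ℂ) (C : ℝ) (hw : ∀ n, ‖w n‖ ≤ C)
    (f : lp (fun _ : ℤ => ℂ) 2) (n : ℤ) : (mulLM w C hw f : ℤ → ℂ) n = w n * f n := rfl

lemma mulLM_norm (w : ℤ → ℂ) (C : ℝ) (hw : ∀ n, ‖w n‖ ≤ C)
    (f : lp (fun _ : ℤ => ℂ) 2) : ‖mulLM w C hw f‖ ≤ C * ‖f‖ := by
  have hC : 0 ≤ C := le_trans (norm_nonneg _) (hw 0)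
  have ht : (0:ℝ) < ((2:ℝ≥0∞)).toReal := by norm_num
  have h1 := lp.norm_rpow_eq_tsum ht (mulLM w C hw f)
  have h2 := lp.norm_rpow_eq_tsum ht f
  have key : ‖mulLM w C hw f‖ ^ ((2:ℝ≥0∞)).toReal ≤ (C * ‖f‖) ^ ((2:ℝ≥0∞)).toReal := by
    rw [h1, rpow2]
    have : ∀ n : ℤ, ‖(mulLM w C hw f : ℤ → ℂ) n‖ ^ ((2:ℝ≥0∞)).toReal
        ≤ C ^ (2:ℕ) * ‖f n‖ ^ ((2:ℝ≥0∞)).toReal := by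
      intro n
      rw [rpow2, rpow2, mulLM_apply, norm_mul, mul_pow]
      exact mul_le_mul_of_nonneg_right (pow_le_pow_left₀ (norm_nonneg _) (hw n) 2)
        (by positivity)
    calc ∑' n, ‖(mulLM w C hw f : ℤ → ℂ) n‖ ^ ((2:ℝ≥0∞)).toReal
        ≤ ∑' n, C ^ (2:ℕ) * ‖f n‖ ^ ((2:ℝ≥0∞)).toReal := by
          refine Summable.tsum_le_tsum this ?_ (((lp.memℓp f).summable ht).mul_left _)
          refine Summable.of_nonneg_of_le (fun n => ?_) this
            (((lp.memℓp f).summable ht).mul_left _)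
          rw [rpow2]; positivity
      _ = C ^ (2:ℕ) * ∑' n, ‖f n‖ ^ ((2:ℝ≥0∞)).toReal := tsum_mul_left
      _ = (C * ‖f‖) ^ (2:ℕ) := by rw [← h2, rpow2, mul_pow]
  rw [rpow2, rpow2] at key
  nlinarith [norm_nonneg (mulLM w C hw f), mul_nonneg hC (norm_nonneg f)]

def mulCLM (w : ℤ → ℂ) (C : ℝ) (hw : ∀ n, ‖w n‖ ≤ C) :
    lp (fun _ : ℤ => ℂ) 2 →L[ℂ] lp (fun _ : ℤ => ℂ) 2 :=
  (mulLM w C hw).mkContinuous C (mulLM_norm w C hw)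

/-- The "diagonal" operator `g ↦ Σ w n ⟪v n, g⟫ v n`. -/
def diagOp (v : HilbertBasis ℤ ℂ H) (w : ℤ → ℂ) (C : ℝ) (hw : ∀ n, ‖w n‖ ≤ C) :
    H →L[ℂ] H :=
  (v.repr.symm.toLinearIsometry.toContinuousLinearMap).comp
    ((mulCLM w C hw).comp v.repr.toLinearIsometry.toContinuousLinearMap)

lemma repr_diagOp (v : HilbertBasis ℤ ℂ H) (w : ℤ → ℂ) (C : ℝ) (hw : ∀ n, ‖w n‖ ≤ C)
    (g : H) (n : ℤ) : v.repr (diagOp v w C hw g) n = w n * v.repr g n := by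
  simp only [diagOp, ContinuousLinearMap.comp_apply,
    LinearIsometry.coe_toContinuousLinearMap, LinearIsometryEquiv.coe_toLinearIsometry]
  rw [LinearIsometryEquiv.apply_symm_apply]
  rfl

lemma inner_diagOp (v : HilbertBasis ℤ ℂ H) (w : ℤ → ℂ) (C : ℝ) (hw : ∀ n, ‖w n‖ ≤ C)
    (g : H) (n : ℤ) : ⟪(v n : H), diagOp v w C hw g⟫ = w n * ⟪(v n : H), g⟫ := by
  rw [← v.repr_apply_apply, ← v.repr_apply_apply]
  exact repr_diagOp v w C hw g n

lemma mem_domain_and_eq {A : H →ₗ.[ℂ] H} (hA : IsSelfAdjoint A) {x y : H}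
    (hxy : ∀ u : A.domain, ⟪y, (u : H)⟫ = ⟪x, A u⟫) :
    ∃ h : x ∈ A.domain, A ⟨x, h⟩ = y := by
  have hAd : A.adjoint = A := hA
  have hT := hA.dense_domain
  have hx' : x ∈ A.adjoint.domain := LinearPMap.mem_adjoint_domain_of_exists x ⟨y, hxy⟩
  have hval : A.adjoint ⟨x, hx'⟩ = y := LinearPMap.adjoint_apply_eq hT ⟨x, hx'⟩ hxy
  have hle : A.adjoint ≤ A := le_of_eq hAd
  exact ⟨hle.1 hx', ((hle.2 rfl).symm).trans hval⟩

lemma inner_eigen {A : H →ₗ.[ℂ] H} (hA : IsSelfAdjoint A) {x : H} {μ : ℝ}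
    (hx : x ∈ A.domain) (hval : A ⟨x, hx⟩ = (μ:ℂ) • x) (u : A.domain) :
    ⟪x, A u⟫ = (μ:ℂ) * ⟪x, (u:H)⟫ := by
  have hAd : A.adjoint = A := hA
  have hT := hA.dense_domain
  have hfa := LinearPMap.adjoint_isFormalAdjoint hT
  have hle : A ≤ A.adjoint := le_of_eq hAd.symm
  have hx' : x ∈ A.adjoint.domain := hle.1 hx
  have h1 := hfa ⟨x, hx'⟩ u
  have h2 : A.adjoint ⟨x, hx'⟩ = A ⟨x, hx⟩ := (le_of_eq hAd).2 rfl
  rw [h2, hval] at h1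
  rw [← h1, inner_smul_left, Complex.conj_ofReal]

lemma resolvent_exists (v : HilbertBasis ℤ ℂ H) (lam : ℤ → ℝ)
    (A : H →ₗ.[ℂ] H) (hA : IsSelfAdjoint A)
    (hAv : ∀ n : ℤ, ∃ h : (v n : H) ∈ A.domain, A ⟨v n, h⟩ = (lam n : ℂ) • (v n : H))
    (φ ψ : H) (z : ℂ) (ε : ℝ) (hε : 0 < ε) (hz : ∀ n, ε ≤ ‖z - (lam n : ℂ)‖)
    (Fz : ℂ)
    (hFz : Fz = (∑' n, (starRingEnd ℂ) ⟪(v n : H), φ⟫ * ⟪(v n : H), ψ⟫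
      * (((lam n : ℂ) - z)⁻¹)) + 1)
    (hFne : Fz ≠ 0) :
    ∃ R : H →L[ℂ] H, (∀ g, R g ∈ A.domain) ∧
      (∀ g, ∀ h : R g ∈ A.domain, A ⟨R g, h⟩ + ⟪φ, R g⟫ • ψ - z • R g = g) ∧
      (∀ f : H, ∀ h : f ∈ A.domain, R (A ⟨f, h⟩ + ⟪φ, f⟫ • ψ - z • f) = f) := by
  set w : ℤ → ℂ := fun n => ((lam n : ℂ) - z)⁻¹ with hw_def
  have hne : ∀ n, (lam n : ℂ) - z ≠ 0 := by
    intro n h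
    have h2 := hz n
    rw [show z - (lam n : ℂ) = -((lam n : ℂ) - z) by ring, h] at h2
    simp at h2; linarith
  have hne' : ∀ n, (lam n : ℂ) - (starRingEnd ℂ) z ≠ 0 := by
    intro n h
    apply hne n
    have := congrArg (starRingEnd ℂ) h
    simpa [Complex.conj_ofReal] using this
  have hwb : ∀ n, ‖w n‖ ≤ ε⁻¹ := by
    intro n
    rw [hw_def]
    simp only [norm_inv]
    have h1 : ε ≤ ‖(lam n : ℂ) - z‖ := by rw [norm_sub_rev]; exact hz n
    exact inv_anti₀ hε h1
  set Rz : H →L[ℂ] H := diagOp v w ε⁻¹ hwb with hRz_def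
  have hinner : ∀ g n, ⟪(v n : H), Rz g⟫ = w n * ⟪(v n : H), g⟫ :=
    fun g n => inner_diagOp v w ε⁻¹ hwb g n
  -- (A - z) Rz = 1
  have hmem : ∀ g : H, ∃ h : Rz g ∈ A.domain, A ⟨Rz g, h⟩ = g + z • Rz g := by
    intro g
    apply mem_domain_and_eq hA
    intro u
    rw [← v.tsum_inner_mul_inner (g + z • Rz g) (u : H),
      ← v.tsum_inner_mul_inner (Rz g) ((A u : H))]
    refine tsum_congr fun n => ?_
    obtain ⟨hvn, hvval⟩ := hAv n
    rw [inner_eigen hA hvn hvval u]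
    rw [← inner_conj_symm (g + z • Rz g) (v n : H), ← inner_conj_symm (Rz g) (v n : H)]
    rw [inner_add_right, inner_smul_right, hinner g n]
    simp only [map_add, map_mul, map_inv₀, map_sub, Complex.conj_ofReal, hw_def]
    field_simp [hne' n]
    ring
  -- Rz (A f) = f + z Rz f
  have hE2 : ∀ (f : H) (hf : f ∈ A.domain), Rz (A ⟨f, hf⟩) = f + z • Rz f := by
    intro f hf
    apply v.repr.injective
    ext n
    rw [v.repr_apply_apply, v.repr_apply_apply]
    rw [hinner (A ⟨f, hf⟩) n]
    obtain ⟨hvn, hvval⟩ := hAv n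
    rw [inner_eigen hA hvn hvval ⟨f, hf⟩]
    rw [inner_add_right, inner_smul_right, hinner f n]
    simp only [hw_def]
    field_simp [hne n]
    ring
  -- the trace identity
  have hE3 : ⟪φ, Rz ψ⟫ = Fz - 1 := by
    rw [hFz, add_sub_cancel_right, ← v.tsum_inner_mul_inner φ (Rz ψ)]
    refine tsum_congr fun n => ?_
    rw [hinner ψ n, ← inner_conj_symm φ (v n : H)]
    simp only [hw_def]
    ring
  set R : H →L[ℂ] H :=
    Rz - Fz⁻¹ • (ContinuousLinearMap.smulRight ((innerSL ℂ φ).comp Rz) (Rz ψ)) with hR_def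
  have hRapp : ∀ g, R g = Rz g - (Fz⁻¹ * ⟪φ, Rz g⟫) • Rz ψ := by
    intro g
    rw [hR_def]
    simp only [ContinuousLinearMap.sub_apply, ContinuousLinearMap.smul_apply,
      ContinuousLinearMap.smulRight_apply, ContinuousLinearMap.comp_apply, innerSL_apply_apply,
      smul_smul]
  refine ⟨R, ?_, ?_, ?_⟩
  · intro g
    rw [hRapp g]
    exact Submodule.sub_mem _ (hmem g).1 (Submodule.smul_mem _ _ (hmem ψ).1)
  · intro g h
    obtain ⟨h1, hv1⟩ := hmem g
    obtain ⟨h2, hv2⟩ := hmem ψ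
    have hsub : (⟨R g, h⟩ : A.domain) = ⟨Rz g, h1⟩ - (Fz⁻¹ * ⟪φ, Rz g⟫) • ⟨Rz ψ, h2⟩ :=
      Subtype.ext (by simp [hRapp g])
    have hval : A ⟨R g, h⟩ = (g + z • Rz g) - (Fz⁻¹ * ⟪φ, Rz g⟫) • (ψ + z • Rz ψ) := by
      rw [hsub, A.map_sub, A.map_smul, hv1, hv2]
    have hip : ⟪φ, R g⟫ = ⟪φ, Rz g⟫ - (Fz⁻¹ * ⟪φ, Rz g⟫) * (Fz - 1) := by
      rw [hRapp g, inner_sub_right, inner_smul_right, hE3]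
    have hk : (Fz⁻¹ * ⟪φ, Rz g⟫) * Fz = ⟪φ, Rz g⟫ := by field_simp
    rw [hval, hip, hRapp g]
    match_scalars <;> (field_simp; try ring)
  · intro f hf
    have hu : Rz (A ⟨f, hf⟩ + ⟪φ, f⟫ • ψ - z • f) = f + ⟪φ, f⟫ • Rz ψ := by
      rw [map_sub, map_add, map_smul, map_smul, hE2 f hf]
      module
    rw [hRapp, hu, inner_add_right, inner_smul_right, hE3]
    match_scalars <;> (field_simp; try ring)
end Stmt18Aux

end




/-- For `A` self-adjoint with simple discrete spectrum `{λₙ}_{n∈ℤ}`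
separated by a gap `d > 0`, and `B = A + ⟨·,φ⟩ψ`: for every `ε > 0` there is
`N > 0` such that every `z` with `|Re z| ≥ N` and `dist(z, spec A) ≥ ε` satisfies
`|F(z)| ≥ 1/2` (with `F(z) = Σₙ conj(aₙ)bₙ/(λₙ−z) + 1`), and consequently every
such `z` lies in the resolvent set of `B`. -/
theorem stmt_18 {H : Type*} [NormedAddCommGroup H] [InnerProductSpace ℂ H] [CompleteSpace H]
    (v : HilbertBasis ℤ ℂ H) (lam : ℤ → ℝ)
    (d : ℝ) (hd : 0 < d) (hgap : ∀ n : ℤ, d ≤ lam (n + 1) - lam n)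
    (A : H →ₗ.[ℂ] H) (hA : IsSelfAdjoint A)
    (hAv : ∀ n : ℤ, ∃ h : (v n : H) ∈ A.domain, A ⟨v n, h⟩ = (lam n : ℂ) • (v n : H))
    (φ ψ : H) (hφ : φ ≠ 0) (hψ : ψ ≠ 0)
    (a b : ℤ → ℂ)
    (ha : ∀ n, a n = (inner ℂ (v n : H) φ : ℂ)) (hb : ∀ n, b n = (inner ℂ (v n : H) ψ : ℂ))
    (F : ℂ → ℂ)
    (hF : ∀ z, F z = ∑' n, starRingEnd ℂ (a n) * b n / ((lam n : ℂ) - z) + 1) :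
    ∀ ε > 0, ∃ N > (0 : ℝ), ∀ z : ℂ, N ≤ |z.re| →
      (∀ n, ε ≤ ‖z - (lam n : ℂ)‖) →
      (1 / 2 ≤ ‖F z‖ ∧
        -- `z` is a resolvent point of `B = A + ⟨·,φ⟩ψ`:
        ∃ R : H →L[ℂ] H,
          (∀ g, R g ∈ A.domain) ∧
          (∀ g, ∀ h : R g ∈ A.domain,
            A ⟨R g, h⟩ + (inner ℂ φ (R g) : ℂ) • ψ - z • R g = g) ∧
          (∀ f : H, ∀ h : f ∈ A.domain,
            R (A ⟨f, h⟩ + (inner ℂ φ f : ℂ) • ψ - z • f) = f)) := by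
  classical
  intro ε hε
  set c : ℤ → ℝ := fun n => ‖a n‖ * ‖b n‖ with hc_def
  have hsq : ∀ x : H, Summable (fun n : ℤ => ‖(inner ℂ (v n : H) x : ℂ)‖ ^ (2:ℕ)) := by
    intro x
    have h : Summable fun n : ℤ => ‖v.repr x n‖ ^ ((2:ℝ≥0∞)).toReal :=
      Memℓp.summable (by norm_num) (lp.memℓp (v.repr x))
    refine h.congr fun n => ?_
    rw [Stmt18Aux.rpow2, v.repr_apply_apply]
  have hca : Summable c := by
    refine Summable.of_nonneg_of_le (fun n => by positivity) (fun n => ?_)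
      (((hsq φ).add (hsq ψ)).mul_left (1/2))
    simp only [hc_def, ha, hb, Pi.add_apply]
    nlinarith [sq_nonneg (‖(inner ℂ (v n : H) φ : ℂ)‖ - ‖(inner ℂ (v n : H) ψ : ℂ)‖),
      norm_nonneg (inner ℂ (v n : H) φ : ℂ), norm_nonneg (inner ℂ (v n : H) ψ : ℂ)]
  set C := ∑' n, c n with hC_def
  have hC0 : 0 ≤ C := tsum_nonneg (fun n => by positivity)
  obtain ⟨s, hs⟩ : ∃ s : Finset ℤ, ∑' (n : {x : ℤ // x ∉ s}), c n < ε/4 :=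
    ((tendsto_order.1 (tendsto_tsum_compl_atTop_zero c)).2 _ (by positivity)).exists
  set M := ∑ n ∈ s, |lam n| with hM_def
  have hM0 : 0 ≤ M := Finset.sum_nonneg fun n _ => abs_nonneg _
  refine ⟨M + 8*C + 9, by positivity, ?_⟩
  intro z hre hdist
  have hz : ∀ n, ε ≤ ‖z - (lam n : ℂ)‖ := fun n => by
    exact hdist n
  set t : ℤ → ℝ := fun n => ‖(starRingEnd ℂ) (a n) * b n / ((lam n : ℂ) - z)‖ with ht_def
  have htc : ∀ n, t n = c n / ‖z - (lam n : ℂ)‖ := by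
    intro n
    simp only [ht_def, hc_def, norm_div, norm_mul, RCLike.norm_conj]
    rw [norm_sub_rev]
  have ht_le : ∀ n, t n ≤ c n / ε := by
    intro n
    rw [htc n]
    gcongr
    exact hz n
  have hts : Summable t :=
    Summable.of_nonneg_of_le (fun n => norm_nonneg _) ht_le (hca.div_const ε)
  have hF1 : F z - 1 = ∑' n, (starRingEnd ℂ) (a n) * b n / ((lam n : ℂ) - z) := by
    rw [hF z]; ring
  have hnorm1 : ‖F z - 1‖ ≤ ∑' n, t n := by
    rw [hF1]; exact norm_tsum_le_tsum_norm hts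
  have hsplit := Summable.sum_add_tsum_compl (s := s) hts
  have hfin : ∑ n ∈ s, t n ≤ 1/4 := by
    have hbig : ∀ n ∈ s, t n ≤ c n / (8*C + 8) := by
      intro n hn
      rw [htc n]
      have h1 : |lam n| ≤ M := Finset.single_le_sum (fun i _ => abs_nonneg (lam i)) hn
      have h2 : |z.re| - |lam n| ≤ |z.re - lam n| := abs_sub_abs_le_abs_sub z.re (lam n)
      have h3 : |z.re - lam n| ≤ ‖z - (lam n : ℂ)‖ := by
        have h4 := Complex.abs_re_le_norm (z - (lam n : ℂ))
        simpa [Complex.sub_re, Complex.ofReal_re] using h4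
      gcongr
      linarith
    calc ∑ n ∈ s, t n ≤ ∑ n ∈ s, c n / (8*C+8) := Finset.sum_le_sum hbig
      _ = (∑ n ∈ s, c n) / (8*C+8) := by rw [Finset.sum_div]
      _ ≤ C / (8*C+8) := by
          gcongr
          exact Summable.sum_le_tsum s (fun n _ => by positivity) hca
      _ ≤ 1/4 := by rw [div_le_div_iff₀ (by positivity) (by norm_num)]; linarith
  have hcompl : ∑' (n : {x : ℤ // x ∉ s}), t n ≤ 1/4 := by
    have h1 : ∑' (n : {x : ℤ // x ∉ s}), t n ≤ ∑' (n : {x : ℤ // x ∉ s}), c (n:ℤ) / ε :=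
      Summable.tsum_le_tsum (fun n => ht_le n) (hts.subtype _) ((hca.div_const ε).subtype _)
    have h2 : ∑' (n : {x : ℤ // x ∉ s}), c (n:ℤ) / ε
        = (∑' (n : {x : ℤ // x ∉ s}), c (n:ℤ)) / ε := tsum_div_const
    have h3 : (∑' (n : {x : ℤ // x ∉ s}), c (n:ℤ)) / ε ≤ (ε/4) / ε := by
      gcongr
    have h4 : (ε/4)/ε = 1/4 := by
      field_simp
    linarith
  have hcompl' : ∑' (x : ↑((↑s : Set ℤ)ᶜ)), t ↑x ≤ 1/4 := hcompl
  have htsum : ∑' n, t n ≤ 1/2 := by rw [← hsplit]; linarith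
  have habs : 1/2 ≤ ‖F z‖ := by
    have h1 : ‖(1:ℂ)‖ ≤ ‖F z‖ + ‖F z - 1‖ := by
      calc ‖(1:ℂ)‖ = ‖F z - (F z - 1)‖ := by norm_num
        _ ≤ ‖F z‖ + ‖F z - 1‖ := norm_sub_le _ _
    rw [norm_one] at h1
    linarith
  refine ⟨habs, ?_⟩
  have hFne : F z ≠ 0 := by
    intro h0
    rw [h0] at habs
    simp at habs
    linarith
  have hFz' : F z = (∑' n, (starRingEnd ℂ) (inner ℂ (v n : H) φ : ℂ) * (inner ℂ (v n : H) ψ : ℂ)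
      * (((lam n : ℂ) - z)⁻¹)) + 1 := by
    rw [hF z]
    congr 1
    refine tsum_congr fun n => ?_
    rw [ha, hb, div_eq_mul_inv]
  exact Stmt18Aux.resolvent_exists v lam A hA hAv φ ψ z ε hε hz (F z) hFz' hFne
end
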